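/- Let C be Hermitian with non-degenerate spectrum and ρ_d = |ψ_d⟩⟨ψ_d| for an eigenvector ψ_d of C. The function V(ρ) = 1 − tr(ρ_d ρ) + tr(C²ρ) − (tr(Cρ))² on density matrices is nonnegative and vanishes only at ρ = ρ_d. -/

import Mathlib

open scoped ComplexOrder

open Matrix

namespace Stmt7Aux

variable {n : ℕ}

lemma trace_conjTranspose_mul_self_nonneg (A : Matrix (Fin n) (Fin n) ℂ) :
    0 ≤ (Aᴴ * A).trace := by
  rw [Matrix.trace]
  refine Finset.sum_nonneg fun i _ => ?_
  rw [Matrix.diag_apply, Matrix.mul_apply]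
  refine Finset.sum_nonneg fun j _ => ?_
  simpa using star_mul_self_nonneg (A j i)

lemma eq_zero_of_trace_conjTranspose_mul_self {A : Matrix (Fin n) (Fin n) ℂ}
    (h : (Aᴴ * A).trace = 0) : A = 0 := by
  rw [Matrix.trace] at h
  have hdiag : ∀ i ∈ Finset.univ, (Aᴴ * A).diag i = 0 := by
    rw [← Finset.sum_eq_zero_iff_of_nonneg]
    · exact h
    · intro i _
      rw [Matrix.diag_apply, Matrix.mul_apply]
      refine Finset.sum_nonneg fun j _ => ?_
      simpa using star_mul_self_nonneg (A j i)
  ext j i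
  have := hdiag i (Finset.mem_univ i)
  rw [Matrix.diag_apply, Matrix.mul_apply] at this
  have hterm : ∀ k ∈ Finset.univ, (Aᴴ : Matrix (Fin n) (Fin n) ℂ) i k * A k i = 0 := by
    rw [← Finset.sum_eq_zero_iff_of_nonneg]
    · exact this
    · intro k _
      simpa using star_mul_self_nonneg (A k i)
  have := hterm j (Finset.mem_univ j)
  rw [Matrix.conjTranspose_apply] at this
  rcases mul_eq_zero.mp this with h' | h'
  · simpa using star_eq_zero.mp h'
  · simpa using h'

open scoped MatrixOrder in
lemma key (ρ : Matrix (Fin n) (Fin n) ℂ) (hρ : ρ.PosSemidef)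
    (D : Matrix (Fin n) (Fin n) ℂ) :
    0 ≤ ((Dᴴ * D) * ρ).trace ∧ (((Dᴴ * D) * ρ).trace = 0 → D * ρ = 0) := by
  set S := CFC.sqrt ρ with hSdef
  have hSH : Sᴴ = S := (CFC.sqrt_nonneg ρ).posSemidef.1
  have hSS : S * S = ρ := CFC.sqrt_mul_sqrt_self ρ hρ.nonneg
  have htr : ((Dᴴ * D) * ρ).trace = ((D * S)ᴴ * (D * S)).trace := by
    calc ((Dᴴ * D) * ρ).trace = ((Dᴴ * (D * S)) * S).trace := by
          rw [← hSS]; congr 1; noncomm_ring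
      _ = (S * (Dᴴ * (D * S))).trace := (Matrix.trace_mul_comm _ _).symm
      _ = ((D * S)ᴴ * (D * S)).trace := by
          rw [Matrix.conjTranspose_mul, hSH]; congr 1; noncomm_ring
  constructor
  · rw [htr]; exact trace_conjTranspose_mul_self_nonneg _
  · intro h
    have hDS : D * S = 0 := eq_zero_of_trace_conjTranspose_mul_self (htr ▸ h)
    calc D * ρ = (D * S) * S := by rw [← hSS]; noncomm_ring
      _ = 0 := by rw [hDS, Matrix.zero_mul]

lemma vecMulVec_mul_vecMulVec (a b c d : Fin n → ℂ) :
    vecMulVec a b * vecMulVec c d = (b ⬝ᵥ c) • vecMulVec a d := by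
  ext i j
  simp only [Matrix.mul_apply, Matrix.vecMulVec_apply, Matrix.smul_apply, smul_eq_mul,
    dotProduct, Finset.sum_mul]
  exact Finset.sum_congr rfl fun k _ => by ring

lemma trace_mul_vecMulVec (A : Matrix (Fin n) (Fin n) ℂ) (v w : Fin n → ℂ) :
    (A * vecMulVec v w).trace = w ⬝ᵥ A.mulVec v := by
  simp only [Matrix.trace, Matrix.diag_apply, Matrix.mul_apply, Matrix.vecMulVec_apply,
    dotProduct, Matrix.mulVec, Finset.mul_sum]
  exact Finset.sum_congr rfl fun i _ => Finset.sum_congr rfl fun j _ => by ring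

lemma vecMulVec_mul (v w : Fin n → ℂ) (A : Matrix (Fin n) (Fin n) ℂ) :
    vecMulVec v w * A = vecMulVec v (Matrix.vecMul w A) := by
  ext i j
  simp only [Matrix.mul_apply, Matrix.vecMulVec_apply, Matrix.vecMul, dotProduct,
    Finset.mul_sum]
  exact Finset.sum_congr rfl fun k _ => by ring

lemma vecMulVec_mulVec' (v w x : Fin n → ℂ) :
    (vecMulVec v w).mulVec x = (w ⬝ᵥ x) • v := by
  funext i
  simp only [Matrix.mulVec, dotProduct, Matrix.vecMulVec_apply, Pi.smul_apply,
    smul_eq_mul, Finset.sum_mul]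
  exact Finset.sum_congr rfl fun k _ => by ring

end Stmt7Aux

open Stmt7Aux

/-- Let `C` be Hermitian with non-degenerate spectrum and `ρ_d = ψ_d ψ_d*` for a unit
eigenvector `ψ_d` of `C`. Then `V(ρ) = 1 − tr(ρ_d ρ) + tr(C²ρ) − (tr(Cρ))²` is a
nonnegative real on density matrices, vanishing only at `ρ = ρ_d`. -/
theorem stmt_7 (N : ℕ) (C : Matrix (Fin N) (Fin N) ℂ) (hC : C.IsHermitian)
    (hnondeg : ∀ (c : ℂ) (v w : Fin N → ℂ), v ≠ 0 → w ≠ 0 →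
      C.mulVec v = c • v → C.mulVec w = c • w → ∃ a : ℂ, w = a • v)
    (ψd : Fin N → ℂ) (hψd : dotProduct (star ψd) ψd = 1)
    (cd : ℂ) (heig : C.mulVec ψd = cd • ψd)
    (ρd : Matrix (Fin N) (Fin N) ℂ) (hρd : ρd = Matrix.vecMulVec ψd (star ψd))
    (ρ : Matrix (Fin N) (Fin N) ℂ) (hρ : ρ.PosSemidef) (htr : ρ.trace = 1) :
    (0 ≤ (1 - (ρd * ρ).trace + (C ^ 2 * ρ).trace - ((C * ρ).trace) ^ 2).re ∧
      (1 - (ρd * ρ).trace + (C ^ 2 * ρ).trace - ((C * ρ).trace) ^ 2).im = 0) ∧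
    (1 - (ρd * ρ).trace + (C ^ 2 * ρ).trace - ((C * ρ).trace) ^ 2 = 0 ↔ ρ = ρd) := by
  have hρdH : ρdᴴ = ρd := by
    rw [hρd]
    ext i j
    simp [Matrix.conjTranspose_apply, Matrix.vecMulVec_apply, mul_comm]
  have hρdρd : ρd * ρd = ρd := by
    rw [hρd, Stmt7Aux.vecMulVec_mul_vecMulVec, hψd, one_smul]
  have ht : star ((C * ρ).trace) = (C * ρ).trace := by
    calc star ((C * ρ).trace) = ((C * ρ)ᴴ).trace := (Matrix.trace_conjTranspose _).symm
      _ = (ρᴴ * Cᴴ).trace := by rw [Matrix.conjTranspose_mul]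
      _ = (ρ * C).trace := by rw [hρ.1, hC]
      _ = (C * ρ).trace := Matrix.trace_mul_comm _ _
  set P := (1 : Matrix (Fin N) (Fin N) ℂ) - ρd with hP
  have hPH : Pᴴ = P := by
    rw [hP, Matrix.conjTranspose_sub, Matrix.conjTranspose_one, hρdH]
  have hPP : Pᴴ * P = P := by
    rw [hPH, hP]
    have : ((1 : Matrix (Fin N) (Fin N) ℂ) - ρd) * (1 - ρd)
        = 1 - ρd - (ρd - ρd * ρd) := by noncomm_ring
    rw [this, hρdρd, sub_self, sub_zero]
  set D := C - ((C * ρ).trace) • (1 : Matrix (Fin N) (Fin N) ℂ) with hD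
  have hDH : Dᴴ = D := by
    rw [hD, Matrix.conjTranspose_sub, Matrix.conjTranspose_smul, Matrix.conjTranspose_one,
      hC, ht]
  have ha : 0 ≤ (P * ρ).trace := by
    rw [← hPP]; exact (key ρ hρ P).1
  have hb : 0 ≤ ((Dᴴ * D) * ρ).trace := (key ρ hρ D).1
  have haval : (P * ρ).trace = 1 - (ρd * ρ).trace := by
    rw [hP, Matrix.sub_mul, Matrix.one_mul, Matrix.trace_sub, htr]
  have hbval : ((Dᴴ * D) * ρ).trace = (C ^ 2 * ρ).trace - ((C * ρ).trace) ^ 2 := by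
    have hDD : Dᴴ * D = C ^ 2 - ((C * ρ).trace + (C * ρ).trace) • C
        + ((C * ρ).trace * (C * ρ).trace) • (1 : Matrix (Fin N) (Fin N) ℂ) := by
      rw [hDH, hD, pow_two, Matrix.sub_mul, Matrix.mul_sub, Matrix.mul_sub,
        Matrix.smul_mul, Matrix.mul_smul, Matrix.smul_mul, Matrix.one_mul, Matrix.mul_one,
        Matrix.one_mul, smul_smul, add_smul]
      abel
    rw [hDD, Matrix.add_mul, Matrix.sub_mul, Matrix.smul_mul, Matrix.smul_mul,
      Matrix.one_mul, Matrix.trace_add, Matrix.trace_sub, Matrix.trace_smul,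
      Matrix.trace_smul, htr]
    simp only [smul_eq_mul]
    ring
  have hE : 1 - (ρd * ρ).trace + (C ^ 2 * ρ).trace - ((C * ρ).trace) ^ 2
      = (P * ρ).trace + ((Dᴴ * D) * ρ).trace := by
    rw [haval, hbval]; ring
  have hsum : 0 ≤ (P * ρ).trace + ((Dᴴ * D) * ρ).trace := add_nonneg ha hb
  refine ⟨⟨?_, ?_⟩, ?_, ?_⟩
  · rw [hE]
    have := (Complex.le_def.mp hsum).1
    simpa using this
  · rw [hE]
    have := (Complex.le_def.mp hsum).2
    simpa using this.symm
  · intro h0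
    rw [hE] at h0
    have har := Complex.le_def.mp ha
    have hbr := Complex.le_def.mp hb
    have ha0 : (P * ρ).trace = 0 := by
      apply Complex.ext
      · have h0re : (P * ρ).trace.re + ((Dᴴ * D) * ρ).trace.re = 0 := by
          have := congrArg Complex.re h0
          simpa [Complex.add_re] using this
        have h1 := har.1
        have h2 := hbr.1
        simp only [Complex.zero_re] at h1 h2 ⊢
        linarith
      · simpa using har.2.symm
    have htr1 : (ρd * ρ).trace = 1 := by
      have := haval ▸ ha0
      have : (1 : ℂ) - (ρd * ρ).trace = 0 := this
      linear_combination -this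
    have hPρ : P * ρ = 0 := (key ρ hρ P).2 (by rw [hPP]; exact ha0)
    have h1 : ρ = ρd * ρ := by
      have := hPρ
      rw [hP, Matrix.sub_mul, Matrix.one_mul, sub_eq_zero] at this
      exact this
    have h2 : ρ = ρ * ρd := by
      calc ρ = ρᴴ := hρ.1.symm
        _ = (ρd * ρ)ᴴ := by rw [← h1]
        _ = ρᴴ * ρdᴴ := Matrix.conjTranspose_mul _ _
        _ = ρ * ρd := by rw [hρ.1, hρdH]
    have h3 : ρ = ρd * ρ * ρd := by
      calc ρ = ρ * ρd := h2
        _ = (ρd * ρ) * ρd := by rw [← h1]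
    have hscal : Matrix.vecMul (star ψd) ρ ⬝ᵥ ψd = 1 := by
      rw [← Matrix.dotProduct_mulVec]
      calc star ψd ⬝ᵥ ρ.mulVec ψd = (ρ * vecMulVec ψd (star ψd)).trace :=
            (trace_mul_vecMulVec ρ ψd (star ψd)).symm
        _ = (ρ * ρd).trace := by rw [← hρd]
        _ = (ρd * ρ).trace := Matrix.trace_mul_comm _ _
        _ = 1 := htr1
    have h4 : ρd * ρ * ρd = ρd := by
      rw [hρd, Stmt7Aux.vecMulVec_mul, Stmt7Aux.vecMulVec_mul_vecMulVec, hscal, one_smul]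
    exact h3.trans h4
  · intro h
    rw [h]
    have e1 : (ρd * ρd).trace = 1 := by
      rw [hρd, trace_mul_vecMulVec, vecMulVec_mulVec', hψd, one_smul, hψd]
    have e2 : (C * ρd).trace = cd := by
      rw [hρd, trace_mul_vecMulVec, heig, dotProduct_smul, hψd, smul_eq_mul, mul_one]
    have e3 : (C ^ 2 * ρd).trace = cd * cd := by
      have hmv : (C ^ 2).mulVec ψd = (cd * cd) • ψd := by
        rw [pow_two, ← Matrix.mulVec_mulVec, heig, Matrix.mulVec_smul, heig, smul_smul]
      rw [hρd, trace_mul_vecMulVec, hmv, dotProduct_smul, hψd, smul_eq_mul, mul_one]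
    rw [e1, e2, e3]
    ring
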